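/- Let T be a tree with t ≥ 3 nodes. Then there exists a family of at most ⌊t/2⌋ 'triplets' (connected subtrees on exactly 3 nodes) whose union covers all nodes of T. -/

import Mathlib

set_option linter.unusedSectionVars false

namespace TTCaux

open SimpleGraph Walk

variable {V : Type} [Fintype V] [DecidableEq V] {G : SimpleGraph V}

/-- connectivity within a finset via walks whose support stays inside. -/
def Conn (G : SimpleGraph V) (s : Finset V) : Prop :=
  ∀ a ∈ s, ∀ b ∈ s, ∃ p : G.Walk a b, ∀ x ∈ p.support, x ∈ s

/-- distance from `r` within `s`. -/
noncomputable def ds (G : SimpleGraph V) (s : Finset V) (r v : V) : ℕ :=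
  sInf {n | ∃ p : G.Walk r v, p.length = n ∧ ∀ x ∈ p.support, x ∈ s}

lemma ds_le (s : Finset V) {r v : V} (p : G.Walk r v) (hp : ∀ x ∈ p.support, x ∈ s) :
    ds G s r v ≤ p.length := Nat.sInf_le ⟨p, rfl, hp⟩

lemma ds_exists {s : Finset V} {r v : V}
    (h : ∃ p : G.Walk r v, ∀ x ∈ p.support, x ∈ s) :
    ∃ p : G.Walk r v, p.IsPath ∧ p.length = ds G s r v ∧ ∀ x ∈ p.support, x ∈ s := by
  obtain ⟨p0, hp0⟩ := h
  have hne : {n | ∃ p : G.Walk r v, p.length = n ∧ ∀ x ∈ p.support, x ∈ s}.Nonempty :=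
    ⟨p0.length, p0, rfl, hp0⟩
  obtain ⟨p, hlen, hsupp⟩ := Nat.sInf_mem hne
  refine ⟨p.bypass, p.bypass_isPath, le_antisymm ?_ ?_, fun x hx => hsupp x (p.support_bypass_subset hx)⟩
  · exact le_trans p.length_bypass_le (le_of_eq hlen)
  · exact ds_le s p.bypass (fun x hx => hsupp x (p.support_bypass_subset hx))

lemma ds_r (s : Finset V) {r : V} (hr : r ∈ s) : ds G s r r = 0 :=
  Nat.le_zero.mp (ds_le s Walk.nil (by simp [hr]))

/-- a vertex of maximal `ds` is on no shortest path to another vertex. -/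
lemma notMem_of_max {s : Finset V} {r v z : V} (p : G.Walk r v)
    (hsupp : ∀ x ∈ p.support, x ∈ s) (hlen : p.length = ds G s r v)
    (hmax : ∀ y ∈ s, ds G s r y ≤ ds G s r z) (hzv : z ≠ v) (hvs : v ∈ s) :
    z ∉ p.support := by
  intro hmem
  have hspec := p.take_spec hmem
  have h1 : ds G s r z ≤ (p.takeUntil z hmem).length :=
    ds_le s _ (fun x hx => hsupp x (p.support_takeUntil_subset hmem hx))
  have h2 : (p.dropUntil z hmem).length ≠ 0 := fun h0 => hzv (eq_of_length_eq_zero h0)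
  have h3 : (p.takeUntil z hmem).length + (p.dropUntil z hmem).length = p.length := by
    conv_rhs => rw [← hspec]
    rw [length_append]
  have h4 : ds G s r v ≤ ds G s r z := hmax v hvs
  omega

/-- walk-crossing lemma. -/
lemma crossing {A : Finset V} : ∀ {a b : V} (p : G.Walk a b), a ∉ A → b ∈ A →
    ∃ x y, x ∈ p.support ∧ y ∈ p.support ∧ G.Adj x y ∧ x ∉ A ∧ y ∈ A := by
  intro a b p
  induction p with
  | nil => intro ha hb; exact absurd hb ha
  | @cons a c b h q ih =>
    intro ha hb
    by_cases hc : c ∈ A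
    · exact ⟨a, c, by simp, by simp, h, ha, hc⟩
    · obtain ⟨x, y, hx, hy, hxy, hxA, hyA⟩ := ih hc hb
      exact ⟨x, y, by simp [hx], by simp [hy], hxy, hxA, hyA⟩

lemma adj_of_conn_pair {s : Finset V} {c d : V} (hc : c ∈ s) (hd : d ∈ s) (hcd : c ≠ d)
    (hsub : ∀ x ∈ s, x = c ∨ x = d) (hconn : Conn G s) : G.Adj c d := by
  obtain ⟨p, hp⟩ := hconn c hc d hd
  cases p with
  | nil => exact absurd rfl hcd
  | cons h q =>
    rename_i v
    have hv : v ∈ s := hp v (by simp)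
    rcases hsub v hv with rfl | rfl
    · exact absurd rfl h.ne
    · exact h

lemma conn_hub {s' : Finset V} {r : V} (hr : r ∈ s')
    (h : ∀ v ∈ s', ∃ p : G.Walk r v, ∀ x ∈ p.support, x ∈ s') : Conn G s' := by
  intro a ha b hb
  obtain ⟨pa, hpa⟩ := h a ha
  obtain ⟨pb, hpb⟩ := h b hb
  refine ⟨pa.reverse.append pb, fun x hx => ?_⟩
  rw [mem_support_append_iff] at hx
  rcases hx with hx | hx
  · exact hpa x (by rwa [support_reverse, List.mem_reverse] at hx)
  · exact hpb x hx

lemma two_step {a b : V} (p : G.Walk a b) (h2 : 2 ≤ p.length) :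
    ∃ (c d : V) (h1 : G.Adj a c) (hcd : G.Adj c d) (q : G.Walk d b),
      p = Walk.cons h1 (Walk.cons hcd q) := by
  cases p with
  | nil => simp at h2
  | cons h q =>
    cases q with
    | nil => simp at h2
    | cons h' q' => exact ⟨_, _, h, h', q', rfl⟩

lemma lemA (hT : G.IsTree) {s : Finset V} (hconn : Conn G s) (h3 : 3 ≤ s.card) :
    ∃ a b c x y : V, a ∈ s ∧ b ∈ s ∧ c ∈ s ∧ G.Adj a b ∧ G.Adj b c ∧ a ≠ c ∧
      x ∈ ({a, b, c} : Finset V) ∧ y ∈ ({a, b, c} : Finset V) ∧ x ≠ y ∧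
      x ∈ s ∧ y ∈ s ∧ Conn G (s \ {x, y}) := by
  have hne : s.Nonempty := Finset.card_pos.mp (by omega)
  obtain ⟨r, hr⟩ := hne
  have hwalk : ∀ v ∈ s, ∃ p : G.Walk r v, ∀ x ∈ p.support, x ∈ s :=
    fun v hv => hconn r hr v hv
  obtain ⟨u, hu, hmaxu⟩ := s.exists_max_image (ds G s r) ⟨r, hr⟩
  have hdsr : ds G s r r = 0 := ds_r s hr
  by_cases hm : ds G s r u ≤ 1
  · -- star case
    have hadj : ∀ v ∈ s, v ≠ r → G.Adj r v := by
      intro v hv hvr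
      obtain ⟨pv, hpv, hlen, hsupp⟩ := ds_exists (hwalk v hv)
      have h1 : ds G s r v ≤ 1 := le_trans (hmaxu v hv) hm
      have h0 : ds G s r v ≠ 0 := by
        intro h0
        exact hvr (eq_of_length_eq_zero (by rw [hlen, h0])).symm
      exact adj_of_length_eq_one (p := pv) (by omega)
    have hcard : 1 < (s.erase r).card := by
      rw [Finset.card_erase_of_mem hr]; omega
    obtain ⟨a, ha, c, hc, hac⟩ := Finset.one_lt_card.mp hcard
    have har : a ≠ r := (Finset.mem_erase.mp ha).1
    have hcr : c ≠ r := (Finset.mem_erase.mp hc).1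
    have has : a ∈ s := (Finset.mem_erase.mp ha).2
    have hcs : c ∈ s := (Finset.mem_erase.mp hc).2
    refine ⟨a, r, c, a, c, has, hr, hcs, (hadj a has har).symm, hadj c hcs hcr, hac,
      by simp, by simp, hac, has, hcs, ?_⟩
    apply conn_hub (r := r) (by simp [Finset.mem_sdiff, hr, har.symm, hcr.symm])
    intro v hv
    rw [Finset.mem_sdiff] at hv
    by_cases hvr : v = r
    · subst hvr
      exact ⟨Walk.nil, by simp [Finset.mem_sdiff, hr, har.symm, hcr.symm]⟩
    · refine ⟨Walk.cons (hadj v hv.1 hvr) Walk.nil, ?_⟩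
      intro x hx
      simp only [support_cons, support_nil, List.mem_cons, List.mem_singleton] at hx
      rcases hx with rfl | hx
      · simp [Finset.mem_sdiff, hr, har.symm, hcr.symm]
      · rcases hx with rfl | h
        · exact Finset.mem_sdiff.mpr ⟨hv.1, hv.2⟩
        · simp at h
  · -- deep case
    push_neg at hm
    set m := ds G s r u with hmdef
    obtain ⟨P, hPpath, hPlen, hPsupp⟩ := ds_exists (hwalk u hu)
    have hQlen : 2 ≤ P.reverse.length := by rw [length_reverse]; omega
    obtain ⟨w, p0, h1, h2, Q2, hQ⟩ := two_step P.reverse hQlen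
    have hQsupp : ∀ x ∈ P.reverse.support, x ∈ s := by
      intro x hx; rw [support_reverse, List.mem_reverse] at hx; exact hPsupp x hx
    have hws : w ∈ s := hQsupp w (by rw [hQ]; simp)
    have hp0s : p0 ∈ s := hQsupp p0 (by rw [hQ]; simp)
    have hQ2supp : ∀ x ∈ Q2.support, x ∈ s := by
      intro x hx; exact hQsupp x (by rw [hQ]; simp [hx])
    -- length facts
    have hLQ : P.reverse.length = m := by rw [length_reverse, hPlen]
    have hQ2len : Q2.length + 2 = m := by rw [hQ] at hLQ; simpa using hLQ
    have hdsp0 : ds G s r p0 ≤ m - 2 := by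
      have := ds_le s Q2.reverse ?_
      · rw [length_reverse] at this; omega
      · intro x hx
        rw [support_reverse, List.mem_reverse] at hx
        exact hQ2supp x hx
    have hdsw_le : ds G s r w ≤ m - 1 := by
      have := ds_le s (Walk.cons h2 Q2).reverse (by
        intro x hx
        rw [support_reverse, List.mem_reverse, support_cons] at hx
        refine hQsupp x ?_
        rw [hQ]
        simp only [support_cons, List.mem_cons]
        rcases List.mem_cons.mp hx with rfl | h
        · exact Or.inr (Or.inl rfl)
        · exact Or.inr (Or.inr h))
      rw [length_reverse] at this
      simp only [length_cons] at this
      omega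
    have hdsw_ge : m - 1 ≤ ds G s r w := by
      obtain ⟨Pw, _, hPwlen, hPwsupp⟩ := ds_exists (hwalk w hws)
      have := ds_le s (Pw.concat h1.symm) (by
        intro x hx
        rw [support_concat] at hx
        simp only [List.concat_eq_append, List.mem_append, List.mem_singleton] at hx
        rcases hx with hx | rfl
        · exact hPwsupp x hx
        · exact hu)
      rw [length_concat, hPwlen] at this
      omega
    have hur : u ≠ r := by intro h; rw [h, hdsr] at hmdef; omega
    have hwr : w ≠ r := by
      intro h; rw [h, hdsr] at hdsw_ge; omega
    have hp0u : p0 ≠ u := by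
      intro h; rw [h] at hdsp0; omega
    by_cases hx : ∃ x ∈ s, G.Adj w x ∧ x ≠ u ∧ x ≠ p0
    · -- sibling case
      obtain ⟨x, hxs, hwx, hxu, hxp0⟩ := hx
      obtain ⟨Px, hPxpath, hPxlen, hPxsupp⟩ := ds_exists (hwalk x hxs)
      by_cases hwPx : w ∈ Px.support
      · -- then ds x = m, and x is removable
        have hdx : ds G s r x = m := by
          have hA : ds G s r w ≤ (Px.takeUntil w hwPx).length :=
            ds_le s _ (fun t ht => hPxsupp t (Px.support_takeUntil_subset hwPx ht))
          have hB : (Px.dropUntil w hwPx).length ≠ 0 := by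
            intro h0
            exact hwx.ne (eq_of_length_eq_zero h0)
          have hC : (Px.takeUntil w hwPx).length + (Px.dropUntil w hwPx).length
              = Px.length := by
            conv_rhs => rw [← Px.take_spec hwPx]
            rw [length_append]
          have hD : ds G s r x ≤ m := hmaxu x hxs
          omega
        have hmaxx : ∀ y ∈ s, ds G s r y ≤ ds G s r x := by
          rw [hdx]; exact hmaxu
        have hrx : r ≠ x := by intro h; rw [← h, hdsr] at hdx; omega
        refine ⟨u, w, x, u, x, hu, hws, hxs, h1, hwx, hxu.symm, by simp, by simp,
          hxu.symm, hu, hxs, ?_⟩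
        apply conn_hub (r := r) (by simp [Finset.mem_sdiff, hr, hur.symm, hrx])
        intro v hv
        rw [Finset.mem_sdiff, Finset.mem_insert, Finset.mem_singleton] at hv
        push_neg at hv
        have hvs := hv.1
        have hvu := hv.2.1
        have hvx := hv.2.2
        obtain ⟨Pv, hPvpath, hPvlen, hPvsupp⟩ := ds_exists (hwalk v hvs)
        have hnu : u ∉ Pv.support :=
          notMem_of_max Pv hPvsupp hPvlen hmaxu (Ne.symm hvu) hvs
        have hnx : x ∉ Pv.support :=
          notMem_of_max Pv hPvsupp hPvlen hmaxx (Ne.symm hvx) hvs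
        refine ⟨Pv, fun t ht => Finset.mem_sdiff.mpr ⟨hPvsupp t ht, ?_⟩⟩
        simp only [Finset.mem_insert, Finset.mem_singleton]
        push_neg
        exact ⟨fun h => hnu (h ▸ ht), fun h => hnx (h ▸ ht)⟩
      · -- contradiction via path uniqueness
        exfalso
        have hApath : (Walk.cons h2 Q2).IsPath := by
          have := hPpath.reverse
          rw [hQ] at this
          exact this.of_cons
        have hBpath : (Walk.cons hwx Px.reverse).IsPath := by
          refine hPxpath.reverse.cons ?_
          rwa [support_reverse, List.mem_reverse]
        have heq : (⟨Walk.cons h2 Q2, hApath⟩ : G.Path w r)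
            = ⟨Walk.cons hwx Px.reverse, hBpath⟩ := hT.IsAcyclic.path_unique _ _
        have heqw : (Walk.cons h2 Q2 : G.Walk w r) = Walk.cons hwx Px.reverse :=
          congrArg Subtype.val heq
        have hgv : (Walk.cons h2 Q2).getVert 1 = (Walk.cons hwx Px.reverse).getVert 1 := by
          rw [heqw]
        rw [getVert_cons_succ, getVert_cons_succ, getVert_zero, getVert_zero] at hgv
        exact hxp0 hgv.symm
    · -- degree-two case
      push_neg at hx
      refine ⟨p0, w, u, w, u, hp0s, hws, hu, h2.symm, h1.symm, hp0u, by simp, by simp,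
        h1.ne', hws, hu, ?_⟩
      have hrw : r ≠ w := Ne.symm hwr
      have hru : r ≠ u := Ne.symm hur
      apply conn_hub (r := r) (by simp [Finset.mem_sdiff, hr, hrw, hru])
      intro v hv
      rw [Finset.mem_sdiff, Finset.mem_insert, Finset.mem_singleton] at hv
      push_neg at hv
      have hvs := hv.1
      have hvw := hv.2.1
      have hvu := hv.2.2
      obtain ⟨Pv, hPvpath, hPvlen, hPvsupp⟩ := ds_exists (hwalk v hvs)
      have hnu : u ∉ Pv.support :=
        notMem_of_max Pv hPvsupp hPvlen hmaxu (Ne.symm hvu) hvs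
      have hnw : w ∉ Pv.support := by
        intro hwPv
        have hwv : w ≠ v := Ne.symm hvw
        -- w is an internal vertex of the path Pv, so it has two distinct
        -- neighbors on the path; each is u or p0, so u is on the path: contradiction
        set q1 := Pv.takeUntil w hwPv with hq1
        set q2 := Pv.dropUntil w hwPv with hq2
        obtain ⟨z1, hz1adj, q1', hq1eq⟩ := exists_eq_cons_of_ne hwr q1.reverse
        obtain ⟨z2, hz2adj, q2', hq2eq⟩ := exists_eq_cons_of_ne hwv q2
        have hz1mem : z1 ∈ q1.support := by
          rw [← List.mem_reverse, ← support_reverse, hq1eq]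
          simp
        have hz2mem : z2 ∈ q2.support.tail := by
          rw [hq2eq, support_cons]
          simp
        have hz1s : z1 ∈ s := hPvsupp z1 (Pv.support_takeUntil_subset hwPv hz1mem)
        have hz2s : z2 ∈ s :=
          hPvsupp z2 (Pv.support_dropUntil_subset hwPv (List.mem_of_mem_tail hz2mem))
        have hnodup : (q1.support ++ q2.support.tail).Nodup := by
          rw [← support_append, take_spec]
          exact hPvpath.support_nodup
        have hz12 : z1 ≠ z2 := by
          intro h
          have hdisj := (List.nodup_append'.mp hnodup).2.2
          exact hdisj hz1mem (h ▸ hz2mem)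
        have huPv : u ∈ Pv.support := by
          by_cases hz1u : z1 = u
          · exact hz1u ▸ Pv.support_takeUntil_subset hwPv hz1mem
          · by_cases hz2u : z2 = u
            · exact hz2u ▸ Pv.support_dropUntil_subset hwPv (List.mem_of_mem_tail hz2mem)
            · have e1 : z1 = p0 := hx z1 hz1s hz1adj hz1u
              have e2 : z2 = p0 := hx z2 hz2s hz2adj hz2u
              exact absurd (e1.trans e2.symm) hz12
        exact hnu huPv
      refine ⟨Pv, fun t ht => Finset.mem_sdiff.mpr ⟨hPvsupp t ht, ?_⟩⟩
      simp only [Finset.mem_insert, Finset.mem_singleton]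
      push_neg
      exact ⟨fun h => hnw (h ▸ ht), fun h => hnu (h ▸ ht)⟩



lemma triple_card {a b c : V} (hab : a ≠ b) (hbc : b ≠ c) (hac : a ≠ c) :
    ({a, b, c} : Finset V).card = 3 := by
  rw [Finset.card_insert_of_notMem (by simp [hab, hac]),
    Finset.card_insert_of_notMem (by simp [hbc])]
  rfl

lemma cover (hT : G.IsTree) : ∀ n : ℕ, ∀ s : Finset V, s.card = n → Conn G s → 3 ≤ n →
    ∃ F : Finset (Finset V), F.card ≤ n / 2 ∧
      (∀ t ∈ F, ∃ a b c, G.Adj a b ∧ G.Adj b c ∧ a ≠ c ∧ t = {a, b, c}) ∧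
      ∀ v ∈ s, ∃ t ∈ F, v ∈ t := by
  intro n
  induction n using Nat.strong_induction_on with
  | _ n ih =>
    intro s hcard hconn h3
    obtain ⟨a, b, c, x, y, has, hbs, hcs, hab, hbc, hac, hxT, hyT, hxy, hxs, hys, hconn'⟩ :=
      lemA hT hconn (hcard ▸ h3)
    have hsub : ({x, y} : Finset V) ⊆ s := by
      intro t ht
      rcases Finset.mem_insert.mp ht with rfl | ht
      · exact hxs
      · exact (Finset.mem_singleton.mp ht) ▸ hys
    have hcard2 : ({x, y} : Finset V).card = 2 := by
      rw [Finset.card_insert_of_notMem (by simp [hxy]), Finset.card_singleton]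
    have hcard' : (s \ {x, y}).card = n - 2 := by
      rw [Finset.card_sdiff_of_subset hsub, hcard, hcard2]
    by_cases h5 : 5 ≤ n
    · obtain ⟨F', hF'card, hF'str, hF'cov⟩ :=
        ih (n - 2) (by omega) (s \ {x, y}) hcard' hconn' (by omega)
      refine ⟨insert {a, b, c} F', ?_, ?_, ?_⟩
      · calc (insert ({a, b, c} : Finset V) F').card ≤ F'.card + 1 :=
              Finset.card_insert_le _ _
          _ ≤ (n - 2) / 2 + 1 := by omega
          _ ≤ n / 2 := by omega
      · intro t ht
        rcases Finset.mem_insert.mp ht with rfl | ht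
        · exact ⟨a, b, c, hab, hbc, hac, rfl⟩
        · exact hF'str t ht
      · intro v hv
        by_cases hvxy : v ∈ ({x, y} : Finset V)
        · refine ⟨{a, b, c}, Finset.mem_insert_self _ _, ?_⟩
          rcases Finset.mem_insert.mp hvxy with rfl | hv'
          · exact hxT
          · exact (Finset.mem_singleton.mp hv') ▸ hyT
        · obtain ⟨t, htF, hvt⟩ := hF'cov v (Finset.mem_sdiff.mpr ⟨hv, hvxy⟩)
          exact ⟨t, Finset.mem_insert_of_mem htF, hvt⟩
    · by_cases h4 : n = 3
      · -- n = 3 : s = {a,b,c}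
        have habc : ({a, b, c} : Finset V) ⊆ s := by
          intro t ht
          rcases Finset.mem_insert.mp ht with rfl | ht
          · exact has
          · rcases Finset.mem_insert.mp ht with rfl | ht
            · exact hbs
            · exact (Finset.mem_singleton.mp ht) ▸ hcs
        have hseq : ({a, b, c} : Finset V) = s :=
          Finset.eq_of_subset_of_card_le habc
            (by rw [hcard, h4, triple_card hab.ne hbc.ne hac])
        refine ⟨{({a, b, c} : Finset V)}, by simp; omega, ?_, ?_⟩
        · intro t ht
          rw [Finset.mem_singleton] at ht
          exact ⟨a, b, c, hab, hbc, hac, ht⟩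
        · intro v hv
          exact ⟨{a, b, c}, Finset.mem_singleton_self _, hseq ▸ hv⟩
      · -- n = 4
        have hn4 : n = 4 := by omega
        have hcard2' : (s \ {x, y}).card = 2 := by omega
        obtain ⟨c1, c2, hc12, hceq⟩ := Finset.card_eq_two.mp hcard2'
        have hc1 : c1 ∈ s \ {x, y} := by rw [hceq]; simp
        have hc2 : c2 ∈ s \ {x, y} := by rw [hceq]; simp
        have hadj12 : G.Adj c1 c2 := by
          refine adj_of_conn_pair hc1 hc2 hc12 ?_ hconn'
          intro t ht
          rw [hceq] at ht
          simpa using ht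
        -- find a crossing edge from x into s \ {x,y}
        have hxns : x ∉ s \ {x, y} := by simp
        obtain ⟨p, hp⟩ := hconn x hxs c1 (Finset.mem_sdiff.mp hc1).1
        obtain ⟨x0, y0, hx0p, hy0p, hadj0, hx0n, hy0m⟩ :=
          crossing (A := s \ {x, y}) p hxns (by rw [hceq]; simp)
        have hy0cc : y0 = c1 ∨ y0 = c2 := by
          rw [hceq] at hy0m; simpa using hy0m
        -- second triple covering c1 and c2
        have hT2 : ∃ t2 : Finset V, (∃ a' b' c', G.Adj a' b' ∧ G.Adj b' c' ∧ a' ≠ c' ∧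
            t2 = {a', b', c'}) ∧ c1 ∈ t2 ∧ c2 ∈ t2 := by
          rcases hy0cc with rfl | rfl
          · refine ⟨{x0, y0, c2}, ⟨x0, y0, c2, hadj0, hadj12, ?_, rfl⟩, by simp, by simp⟩
            intro h
            exact hx0n (h ▸ (by rw [hceq]; simp : c2 ∈ s \ {x, y}))
          · refine ⟨{x0, y0, c1}, ⟨x0, y0, c1, hadj0, hadj12.symm, ?_, rfl⟩, by simp, by simp⟩
            intro h
            exact hx0n (h ▸ (by rw [hceq]; simp : c1 ∈ s \ {x, y}))
        obtain ⟨t2, ht2str, hc1t2, hc2t2⟩ := hT2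
        refine ⟨insert {a, b, c} ({t2} : Finset (Finset V)), ?_, ?_, ?_⟩
        · calc (insert ({a, b, c} : Finset V) ({t2} : Finset (Finset V))).card
              ≤ ({t2} : Finset (Finset V)).card + 1 :=
              Finset.card_insert_le _ _
          _ ≤ 2 := by simp
          _ ≤ n / 2 := by omega
        · intro t ht
          rcases Finset.mem_insert.mp ht with rfl | ht
          · exact ⟨a, b, c, hab, hbc, hac, rfl⟩
          · exact (Finset.mem_singleton.mp ht) ▸ ht2str
        · intro v hv
          by_cases hvxy : v ∈ ({x, y} : Finset V)
          · refine ⟨{a, b, c}, Finset.mem_insert_self _ _, ?_⟩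
            rcases Finset.mem_insert.mp hvxy with rfl | hv'
            · exact hxT
            · exact (Finset.mem_singleton.mp hv') ▸ hyT
          · have : v ∈ s \ {x, y} := Finset.mem_sdiff.mpr ⟨hv, hvxy⟩
            rw [hceq] at this
            refine ⟨t2, by simp, ?_⟩
            rcases Finset.mem_insert.mp this with rfl | hv'
            · exact hc1t2
            · exact (Finset.mem_singleton.mp hv') ▸ hc2t2

lemma triple_induce_connected {a b c : V} (hab : G.Adj a b) (hbc : G.Adj b c) :
    (G.induce (↑({a, b, c} : Finset V) : Set V)).Connected := by
  have hb : b ∈ (↑({a, b, c} : Finset V) : Set V) := by simp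
  have key : ∀ z : (↑({a, b, c} : Finset V) : Set V),
      (G.induce (↑({a, b, c} : Finset V) : Set V)).Reachable z ⟨b, hb⟩ := by
    rintro ⟨v, hv⟩
    simp only [Finset.coe_insert, Set.mem_insert_iff, Finset.coe_singleton,
      Set.mem_singleton_iff] at hv
    rcases hv with rfl | rfl | rfl
    · exact SimpleGraph.Adj.reachable (by simpa using hab)
    · exact SimpleGraph.Reachable.refl _
    · exact SimpleGraph.Adj.reachable (by simpa using hbc.symm)
  have hne : Nonempty (↑({a, b, c} : Finset V) : Set V) := ⟨⟨b, hb⟩⟩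
  constructor
  intro z w
  exact (key z).trans (key w).symm

end TTCaux

/-- Let `T` be a tree with `t ≥ 3` nodes. Then there exists a family of at most
`⌊t/2⌋` triplets (connected subtrees on exactly 3 nodes) whose union covers all nodes of `T`. -/
theorem tree_triplet_cover {V : Type} [Fintype V] [DecidableEq V]
    (G : SimpleGraph V) (hT : G.IsTree) (h3 : 3 ≤ Fintype.card V) :
    ∃ F : Finset (Finset V),
      F.card ≤ Fintype.card V / 2 ∧
      (∀ s ∈ F, s.card = 3 ∧ (G.induce (↑s : Set V)).Connected) ∧
      (∀ v : V, ∃ s ∈ F, v ∈ s) := by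
  have hconn : TTCaux.Conn G Finset.univ := by
    intro a _ b _
    obtain ⟨p⟩ := hT.isConnected.preconnected a b
    exact ⟨p, fun x _ => Finset.mem_univ x⟩
  obtain ⟨F, hFcard, hFstr, hFcov⟩ :=
    TTCaux.cover hT (Fintype.card V) Finset.univ (Finset.card_univ) hconn h3
  refine ⟨F, hFcard, ?_, fun v => hFcov v (Finset.mem_univ v)⟩
  intro s hs
  obtain ⟨a, b, c, hab, hbc, hac, rfl⟩ := hFstr s hs
  exact ⟨TTCaux.triple_card hab.ne hbc.ne hac, TTCaux.triple_induce_connected hab hbc⟩
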